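/- Let g : ℝ → ℝ be continuous, nonnegative, and not identically zero on any nonempty open interval of (0,∞), and let γ₁(h) = ∫_{τ=0}^{h} ∫_{t=0}^{h-τ} g(t) dt dτ. Then for every h > 0 and every δ ∈ (0, h], γ₁(h+δ) + γ₁(h-δ) > 2 γ₁(h). -/

import Mathlib

open intervalIntegral Set

/-- For continuous nonnegative `g` that is not identically zero on any nonempty open
subinterval of `(0,∞)`, with `γ₁ h = ∫ τ in 0..h, ∫ t in 0..(h-τ), g t`, one has
`γ₁(h+δ) + γ₁(h-δ) > 2 γ₁(h)` for every `h > 0` and `δ ∈ (0, h]`. -/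
theorem stmt_1 (g : ℝ → ℝ) (hg : Continuous g) (hg0 : ∀ t, 0 ≤ t → 0 ≤ g t)
    (hgne : ∀ a b : ℝ, 0 < a → a < b → ∃ t, a < t ∧ t < b ∧ 0 < g t)
    (γ₁ : ℝ → ℝ)
    (hγ₁ : ∀ h : ℝ, γ₁ h = ∫ τ in (0:ℝ)..h, ∫ t in (0:ℝ)..(h - τ), g t) :
    ∀ h δ : ℝ, 0 < h → 0 < δ → δ ≤ h → 2 * γ₁ h < γ₁ (h + δ) + γ₁ (h - δ) := by
  intro h δ hh hδ hδh
  set G : ℝ → ℝ := fun x => ∫ t in (0:ℝ)..x, g t with hG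
  have hgi : ∀ a b : ℝ, IntervalIntegrable g MeasureTheory.volume a b :=
    fun a b => hg.intervalIntegrable a b
  have hGc : Continuous G := intervalIntegral.continuous_primitive hgi 0
  have hGi : ∀ a b : ℝ, IntervalIntegrable G MeasureTheory.volume a b :=
    fun a b => hGc.intervalIntegrable a b
  -- γ₁ x = ∫ s in 0..x, G s
  have hγ : ∀ x : ℝ, γ₁ x = ∫ s in (0:ℝ)..x, G s := by
    intro x
    rw [hγ₁ x]
    rw [intervalIntegral.integral_comp_sub_left (fun y => G y) x]
    simp
  -- key positivity of ∫ g over subintervals of (0,∞)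
  have key : ∀ a b : ℝ, 0 < a → a < b → 0 < ∫ t in a..b, g t := by
    intro a b ha hab
    obtain ⟨t₀, ht₀a, ht₀b, ht₀⟩ := hgne a b ha hab
    have h₀ : 0 ≤ᵐ[MeasureTheory.volume.restrict (Set.uIoc a b)] g := by
      rw [uIoc_of_le hab.le]
      refine (MeasureTheory.ae_restrict_iff' measurableSet_Ioc).2 ?_
      filter_upwards with x hx using hg0 x (ha.le.trans hx.1.le)
    rw [intervalIntegral.integral_pos_iff_support_of_nonneg_ae' h₀ (hgi a b)]
    refine ⟨hab, ?_⟩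
    have hopen : IsOpen {x : ℝ | 0 < g x} := isOpen_lt continuous_const hg
    obtain ⟨ε, hε, hball⟩ := Metric.isOpen_iff.1 hopen t₀ ht₀
    set c := max a (t₀ - ε) with hc
    set d := min b (t₀ + ε) with hd
    have hcd : c < d := by
      simp only [hc, hd, lt_min_iff, max_lt_iff]
      refine ⟨⟨hab, by linarith⟩, by linarith, by linarith⟩
    have hsub : Ioo c d ⊆ Function.support g ∩ Ioc a b := by
      intro x hx
      constructor
      · apply Function.mem_support.2
        have : x ∈ Metric.ball t₀ ε := by
          rw [Real.ball_eq_Ioo]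
          exact ⟨lt_of_le_of_lt (le_max_right _ _) hx.1, hx.2.trans_le (min_le_right _ _)⟩
        exact (hball this).ne'
      · exact ⟨lt_of_le_of_lt (le_max_left _ _) hx.1, (hx.2.trans_le (min_le_left _ _)).le⟩
    calc (0:ENNReal) < MeasureTheory.volume (Ioo c d) := by
          rw [Real.volume_Ioo]; exact ENNReal.ofReal_pos.2 (by linarith)
      _ ≤ _ := MeasureTheory.measure_mono hsub
  -- split integrals
  have h1 : γ₁ (h + δ) - γ₁ h = ∫ s in h..(h + δ), G s := by
    rw [hγ, hγ, ← intervalIntegral.integral_add_adjacent_intervals (hGi 0 h) (hGi h (h + δ))]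
    ring
  have h2 : γ₁ h - γ₁ (h - δ) = ∫ s in (h - δ)..h, G s := by
    rw [hγ, hγ, ← intervalIntegral.integral_add_adjacent_intervals (hGi 0 (h - δ)) (hGi (h - δ) h)]
    ring
  -- rewrite as integrals over 0..δ
  have h3 : (∫ s in h..(h + δ), G s) = ∫ s in (0:ℝ)..δ, G (s + h) := by
    rw [intervalIntegral.integral_comp_add_right (fun y => G y) h]
    norm_num [add_comm]
  have h4 : (∫ s in (h - δ)..h, G s) = ∫ s in (0:ℝ)..δ, G (s + (h - δ)) := by
    rw [intervalIntegral.integral_comp_add_right (fun y => G y) (h - δ)]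
    norm_num
  have hint1 : IntervalIntegrable (fun s => G (s + h)) MeasureTheory.volume 0 δ :=
    (hGc.comp (continuous_id.add continuous_const)).intervalIntegrable 0 δ
  have hint2 : IntervalIntegrable (fun s => G (s + (h - δ))) MeasureTheory.volume 0 δ :=
    (hGc.comp (continuous_id.add continuous_const)).intervalIntegrable 0 δ
  have hpos : 0 < ∫ s in (0:ℝ)..δ, (G (s + h) - G (s + (h - δ))) := by
    apply intervalIntegral.intervalIntegral_pos_of_pos_on (hint1.sub hint2) _ hδ
    intro s hs
    have hdiff : G (s + h) - G (s + (h - δ)) = ∫ t in (s + (h - δ))..(s + h), g t := by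
      rw [hG]
      exact intervalIntegral.integral_interval_sub_left (hgi 0 (s + h)) (hgi 0 (s + (h - δ)))
    rw [sub_pos, ← sub_pos, hdiff]
    exact key _ _ (by simp at hs; nlinarith [hs.1, hs.2]) (by simp at hs; linarith [hs.1, hs.2])
  rw [intervalIntegral.integral_sub hint1 hint2, ← h3, ← h4, ← h1, ← h2] at hpos
  linarith
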